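/- The uniform assignment αᵢ = ᾱ for all i minimizes total capacity C(α) = Σᵢ c(αᵢ) over all α ∈ [0,1]ⁿ satisfying the constraint Σᵢ (αᵢ - ᾱ)·c(αᵢ) = 0, and the minimum value is n·c(ᾱ). -/

import Mathlib

/-- The uniform assignment `αᵢ = ᾱ` minimizes the total capacity over
feasible assignments, and the minimum value is `n·c(ᾱ)`. -/
theorem uniform_minimizes_capacity
    (n : ℕ) (hn : 1 ≤ n) (abar d L h hb : ℝ)
    (habar : abar ∈ Set.Icc (0 : ℝ) 1)
    (hd : 0 < d) (hL : 0 < L) (hhb : 0 ≤ hb) (hbh : hb ≤ h)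
    (c : ℝ → ℝ) (hc : ∀ α, c α = d / (L + α ^ 2 * hb + (1 - α ^ 2) * h)) :
    (∑ _i : Fin n, (abar - abar) * c abar = 0) ∧
    (∀ αs : Fin n → ℝ, (∀ i, αs i ∈ Set.Icc (0 : ℝ) 1) →
      (∑ i, (αs i - abar) * c (αs i) = 0) →
      (n : ℝ) * c abar ≤ ∑ i, c (αs i)) := by
  obtain ⟨hab0, hab1⟩ := habar
  -- positivity of denominators on [0,1]
  have hg : ∀ α : ℝ, α ∈ Set.Icc (0 : ℝ) 1 →
      0 < L + α ^ 2 * hb + (1 - α ^ 2) * h := by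
    intro α ⟨h0, h1⟩
    have h2 : α ^ 2 ≤ 1 := by nlinarith
    have hh : 0 ≤ h := le_trans hhb hbh
    nlinarith [mul_nonneg (sq_nonneg α) hhb,
      mul_nonneg (by linarith : (0:ℝ) ≤ 1 - α ^ 2) hh]
  have hgb := hg abar ⟨hab0, hab1⟩
  set lam : ℝ := 2 * (h - hb) * abar / (L + abar ^ 2 * hb + (1 - abar ^ 2) * h) with hlam
  -- pointwise inequality
  have key : ∀ α : ℝ, α ∈ Set.Icc (0 : ℝ) 1 →
      c abar + lam * ((α - abar) * c α) ≤ c α := by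
    intro α hα
    have hga := hg α hα
    have hid : c α - c abar - lam * ((α - abar) * c α)
        = d * (h - hb) * (α - abar) ^ 2
          / ((L + α ^ 2 * hb + (1 - α ^ 2) * h)
            * (L + abar ^ 2 * hb + (1 - abar ^ 2) * h)) := by
      rw [hc, hc, hlam]
      field_simp
      have hD : L + hb * abar ^ 2 + h - h * abar ^ 2 ≠ 0 := by
        have : 0 < L + hb * abar ^ 2 + h - h * abar ^ 2 := by linarith
        exact this.ne'
      linear_combination -(mul_inv_cancel₀ hD)
    have hnn : 0 ≤ d * (h - hb) * (α - abar) ^ 2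
          / ((L + α ^ 2 * hb + (1 - α ^ 2) * h)
            * (L + abar ^ 2 * hb + (1 - abar ^ 2) * h)) := by
      apply div_nonneg
      · have : 0 ≤ h - hb := by linarith
        positivity
      · positivity
    linarith [hid ▸ hnn]
  refine ⟨by simp, ?_⟩
  intro αs hαs hconstr
  have hsum : ∑ i, (c abar + lam * ((αs i - abar) * c (αs i))) ≤ ∑ i, c (αs i) :=
    Finset.sum_le_sum fun i _ => key (αs i) (hαs i)
  calc (n : ℝ) * c abar
      = ∑ i, (c abar + lam * ((αs i - abar) * c (αs i))) := by
        rw [Finset.sum_add_distrib, ← Finset.mul_sum, hconstr]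
        simp [mul_comm]
    _ ≤ ∑ i, c (αs i) := hsum
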